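/- Let R be a commutative ring, let c : Fin k → Fin d → ℕ and q : Fin d → ℕ take values in {0,1}, and define the extended polynomial P_q := Σ_{i : Fin d} (∏_{j : Fin k} (X (Sum.inl j))^(c j i)) * (X (Sum.inr ()))^(q i) in MvPolynomial (Fin k ⊕ Unit) R. Let L be a list of pairwise distinct indices in Fin k such that for every i : Fin d, q i = 1 if and only if c j i = 1 for every j in L (the logical equivalence π_{j₁} ∧ ⋯ ∧ π_{j_ℓ} ⇔ π). Writing D_L for the composition of the partial derivatives pderiv (Sum.inl j) over j in L, we have (∏_{j ∈ L} X (Sum.inl j)) * D_L P_q = X (Sum.inr ()) * pderiv (Sum.inr ()) P_q. -/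

import Mathlib

open MvPolynomial

section Aux

variable {σ : Type*} [DecidableEq σ] {R : Type*} [CommRing R]

private lemma sum_single_apply_of_not_mem (L : List σ) (x : σ) (hx : x ∉ L) :
    ((L.map (fun j => Finsupp.single j 1)).sum : σ →₀ ℕ) x = 0 := by
  induction L with
  | nil => simp
  | cons j L ih =>
    simp only [List.mem_cons, not_or] at hx
    simp [Finsupp.single_apply, Ne.symm hx.1, ih hx.2]

private lemma sum_single_apply_of_mem (L : List σ) (hL : L.Nodup) (x : σ) (hx : x ∈ L) :
    ((L.map (fun j => Finsupp.single j 1)).sum : σ →₀ ℕ) x = 1 := by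
  induction L with
  | nil => simp at hx
  | cons j L ih =>
    rcases List.nodup_cons.mp hL with ⟨hj, hLn⟩
    rcases List.mem_cons.mp hx with rfl | hx
    · simp [Finsupp.single_apply, sum_single_apply_of_not_mem L x hj]
    · have hxj : x ≠ j := fun h => hj (h ▸ hx)
      simp [Finsupp.single_apply, Ne.symm hxj, ih hLn hx]

private lemma foldr_pderiv_monomial (L : List σ) (hL : L.Nodup) (m : σ →₀ ℕ) (a : R) :
    L.foldr (fun j p => pderiv j p) (monomial m a) =
      monomial (m - (L.map (fun j => Finsupp.single j 1)).sum)
        (a * ((L.map m).prod : ℕ)) := by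
  induction L with
  | nil => simp
  | cons j L ih =>
    rcases List.nodup_cons.mp hL with ⟨hj, hLn⟩
    have hmj : ((m - (L.map (fun j => Finsupp.single j 1)).sum : σ →₀ ℕ)) j = m j := by
      rw [Finsupp.tsub_apply, sum_single_apply_of_not_mem L j hj, Nat.sub_zero]
    simp only [List.foldr_cons, ih hLn, pderiv_monomial, hmj, List.map_cons, List.sum_cons,
      List.prod_cons]
    rw [tsub_tsub, add_comm]
    congr 1
    push_cast
    ring

private lemma prod_X_list (L : List σ) :
    ((L.map (fun j => (X j : MvPolynomial σ R))).prod) =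
      monomial ((L.map (fun j => Finsupp.single j 1)).sum) 1 := by
  induction L with
  | nil => simp
  | cons j L ih =>
    simp only [List.map_cons, List.prod_cons, List.sum_cons, ih]
    rw [X, monomial_mul, one_mul]

private lemma key (L : List σ) (hL : L.Nodup) (m : σ →₀ ℕ) (a : R) :
    ((L.map (fun j => (X j : MvPolynomial σ R))).prod) *
        L.foldr (fun j p => pderiv j p) (monomial m a) =
      ((L.map m).prod) • monomial m a := by
  rw [foldr_pderiv_monomial L hL, prod_X_list, monomial_mul, one_mul]
  by_cases h : ∀ j ∈ L, 1 ≤ m j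
  · have hle : (L.map (fun j => Finsupp.single j 1)).sum ≤ m := by
      intro x
      by_cases hx : x ∈ L
      · rw [sum_single_apply_of_mem L hL x hx]; exact h x hx
      · rw [sum_single_apply_of_not_mem L x hx]; exact Nat.zero_le _
    rw [add_tsub_cancel_of_le hle, smul_monomial]
    congr 1
    rw [nsmul_eq_mul, mul_comm]
  · push_neg at h
    obtain ⟨j, hjL, hjm⟩ := h
    have hmj : m j = 0 := by omega
    have hprod : (L.map m).prod = 0 :=
      List.prod_eq_zero (by exact List.mem_map.mpr ⟨j, hjL, hmj⟩)
    rw [hprod]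
    simp

private lemma prod_monomial {α : Type*} (s : Finset α) (f : α → (σ →₀ ℕ)) :
    (∏ x ∈ s, (monomial (f x) (1 : R))) = monomial (∑ x ∈ s, f x) 1 := by
  classical
  induction s using Finset.induction with
  | empty => simp
  | insert _ _ hx ih =>
    rw [Finset.prod_insert hx, Finset.sum_insert hx, ih, monomial_mul, one_mul]

private lemma foldr_pderiv_sum {α τ : Type*} (g : τ → σ) (L : List τ) (s : Finset α)
    (f : α → MvPolynomial σ R) :
    L.foldr (fun j p => pderiv (g j) p) (∑ i ∈ s, f i) =
      ∑ i ∈ s, L.foldr (fun j p => pderiv (g j) p) (f i) := by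
  induction L with
  | nil => simp
  | cons j L ih => simp [ih, map_sum]

end Aux

/-- Lemma (query derivative), part (2): if the logical equivalence
`π_{j₁} ∧ ⋯ ∧ π_{j_ℓ} ⇔ π` holds, then
`α_{j₁}⋯α_{j_ℓ} ∂^ℓ P_q / ∂α_{j₁}⋯∂α_{j_ℓ} = β ∂P_q/∂β`. -/
theorem stmt_6 (R : Type*) [CommRing R] (k d : ℕ)
    (c : Fin k → Fin d → ℕ) (hc : ∀ (j : Fin k) (i : Fin d), c j i ≤ 1)
    (q : Fin d → ℕ) (hq : ∀ i : Fin d, q i ≤ 1)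
    (Pq : MvPolynomial (Fin k ⊕ Unit) R)
    (hPq : Pq = ∑ i : Fin d,
        (∏ j : Fin k, (X (Sum.inl j) : MvPolynomial (Fin k ⊕ Unit) R) ^ (c j i)) *
          (X (Sum.inr ()) : MvPolynomial (Fin k ⊕ Unit) R) ^ (q i))
    (L : List (Fin k)) (hL : L.Nodup)
    (hiff : ∀ i : Fin d, q i = 1 ↔ ∀ j ∈ L, c j i = 1) :
    (L.map (fun j => (X (Sum.inl j) : MvPolynomial (Fin k ⊕ Unit) R))).prod *
        (L.foldr (fun j p => pderiv (Sum.inl j) p) Pq) =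
      (X (Sum.inr ()) : MvPolynomial (Fin k ⊕ Unit) R) * pderiv (Sum.inr ()) Pq := by
  classical
  set σ := Fin k ⊕ Unit
  -- the monomial exponent for tuple i
  set m : Fin d → (σ →₀ ℕ) := fun i =>
    (∑ j : Fin k, Finsupp.single (Sum.inl j) (c j i)) + Finsupp.single (Sum.inr ()) (q i)
    with hm
  have hterm : ∀ i : Fin d,
      (∏ j : Fin k, (X (Sum.inl j) : MvPolynomial σ R) ^ (c j i)) *
          (X (Sum.inr ()) : MvPolynomial σ R) ^ (q i) = monomial (m i) 1 := by
    intro i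
    rw [hm]
    simp only [X_pow_eq_monomial]
    rw [prod_monomial, monomial_mul, one_mul]
  have hminl : ∀ (i : Fin d) (j : Fin k), m i (Sum.inl j) = c j i := by
    intro i j
    simp only [hm, Finsupp.add_apply, Finsupp.finset_sum_apply,
      Finsupp.single_apply_left Sum.inl_injective, Finsupp.single_apply,
      Finset.sum_ite_eq', Finset.mem_univ, if_true]
    simp
  have hminr : ∀ i : Fin d, m i (Sum.inr ()) = q i := by
    intro i
    simp [hm, Finsupp.single_apply, Finsupp.finset_sum_apply]
  have hprodq : ∀ i : Fin d, ((L.map Sum.inl).map (m i)).prod = q i := by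
    intro i
    rw [List.map_map]
    have : (m i) ∘ Sum.inl = fun j => c j i := by
      funext j; exact hminl i j
    rw [this]
    rcases Nat.le_one_iff_eq_zero_or_eq_one.mp (hq i) with h | h
    · rw [h]
      have : ¬ ∀ j ∈ L, c j i = 1 := by
        rw [← hiff i, h]; omega
      push_neg at this
      obtain ⟨j, hjL, hjc⟩ := this
      have : c j i = 0 := by have := hc j i; omega
      exact List.prod_eq_zero (List.mem_map.mpr ⟨j, hjL, this⟩)
    · rw [h]
      apply List.prod_eq_one
      intro x hx
      obtain ⟨j, hjL, rfl⟩ := List.mem_map.mp hx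
      exact (hiff i).mp h j hjL
  subst hPq
  rw [foldr_pderiv_sum Sum.inl, map_sum, Finset.mul_sum, Finset.mul_sum]
  apply Finset.sum_congr rfl
  intro i _
  rw [hterm i]
  -- left side via the key lemma with the list L.map Sum.inl
  have hLn : (L.map Sum.inl : List σ).Nodup := hL.map Sum.inl_injective
  have hleft := key (R := R) (L.map Sum.inl) hLn (m i) 1
  rw [List.map_map, List.foldr_map] at hleft
  simp only [Function.comp_def] at hleft
  have hright := key (R := R) ([(Sum.inr () : σ)]) (List.nodup_singleton _) (m i) 1
  simp only [List.map_singleton, List.prod_singleton, List.foldr_cons, List.foldr_nil,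
    List.prod_cons, List.prod_nil, mul_one] at hright
  rw [hleft, hright, hprodq i]
  simp [hminr i]
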